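/- Let π : [0,T] → ℝ be differentiable, satisfying π(0) = π₀ ≥ 0 and the equation π'(t) + (1/μ)·(π(t) + ((2−γ)/2)·G(t))² = (γ²/(4μ))·G(t)² on [0,T], where μ > 0, γ > 1, and G : [0,T] → ℝ is continuous. Then 0 ≤ π(t) ≤ π₀ + (γ²/(4μ))·∫₀ᵗ G(τ)² dτ for all t ∈ [0,T]. -/

import Mathlib

open Set intervalIntegral

/-- Pointwise pressure estimate: if
`π' + (1/μ)(π + ((2−γ)/2)G)² = (γ²/(4μ))G²` with `π(0) = π₀ ≥ 0`, then
`0 ≤ π(t) ≤ π₀ + (γ²/(4μ))∫₀ᵗ G²`. -/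
theorem stmt6 (p p' G : ℝ → ℝ) (μ γ T p₀ : ℝ) (hμ : 0 < μ) (hγ : 1 < γ)
    (hT : 0 < T) (hp0 : p 0 = p₀) (hp₀ : 0 ≤ p₀) (hG : Continuous G)
    (hderiv : ∀ t ∈ Icc 0 T, HasDerivAt p (p' t) t)
    (heq : ∀ t ∈ Icc 0 T,
      p' t + (1 / μ) * (p t + ((2 - γ) / 2) * G t) ^ 2 = (γ ^ 2 / (4 * μ)) * (G t) ^ 2) :
    ∀ t ∈ Icc 0 T,
      0 ≤ p t ∧ p t ≤ p₀ + (γ ^ 2 / (4 * μ)) * ∫ τ in (0 : ℝ)..t, (G τ) ^ 2 := by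
  have hμ' : μ ≠ 0 := ne_of_gt hμ
  -- continuity of p on Icc
  have hpc : ContinuousOn p (Icc 0 T) := fun t ht =>
    (hderiv t ht).continuousAt.continuousWithinAt
  -- the clamp map
  set cl : ℝ → ℝ := fun τ => max 0 (min τ T) with hcl
  have hclc : Continuous cl := continuous_const.max (continuous_id.min continuous_const)
  have hclmem : ∀ τ, cl τ ∈ Icc 0 T := fun τ =>
    ⟨le_max_left _ _, max_le (le_of_lt hT) (min_le_right _ _)⟩
  have hcleq : ∀ t ∈ Icc 0 T, cl t = t := fun t ht => by
    simp [hcl, min_eq_left ht.2, max_eq_right ht.1]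
  -- the coefficient a and its clamped version
  set a : ℝ → ℝ := fun τ => (1 / μ) * (p τ + (2 - γ) * G τ) with ha
  have hac : ContinuousOn a (Icc 0 T) :=
    continuousOn_const.mul (hpc.add (continuousOn_const.mul hG.continuousOn))
  set b : ℝ → ℝ := fun τ => a (cl τ) with hb
  have hbc : Continuous b := hac.comp_continuous hclc hclmem
  -- primitive of b
  set A : ℝ → ℝ := fun t => ∫ τ in (0:ℝ)..t, b τ with hA
  have hAderiv : ∀ t : ℝ, HasDerivAt A (b t) t := fun t =>
    intervalIntegral.integral_hasDerivAt_right (hbc.intervalIntegrable _ _)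
      (hbc.stronglyMeasurableAtFilter _ _) hbc.continuousAt
  -- key identity
  have key : ∀ t ∈ Icc 0 T, p' t + a t * p t = ((γ - 1) / μ) * G t ^ 2 := by
    intro t ht
    have h := heq t ht
    field_simp [ha] at h ⊢
    simp only [ha]
    field_simp
    linear_combination h / 16
  -- q = p * exp A is monotone on Icc
  set q : ℝ → ℝ := fun t => p t * Real.exp (A t) with hq
  have hqderiv : ∀ t ∈ Icc 0 T,
      HasDerivAt q ((p' t + a t * p t) * Real.exp (A t)) t := by
    intro t ht
    have h1 : HasDerivAt (fun x => Real.exp (A x)) (Real.exp (A t) * b t) t :=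
      (hAderiv t).exp
    have h2 := (hderiv t ht).mul h1
    have hbt : b t = a t := by rw [hb]; simp only []; rw [hcleq t ht]
    have h2' : HasDerivAt q (p' t * Real.exp (A t) + p t * (Real.exp (A t) * b t)) t := h2
    convert h2' using 1
    rw [hbt]; ring
  have hqmono : MonotoneOn q (Icc 0 T) := by
    apply monotoneOn_of_deriv_nonneg (convex_Icc 0 T)
    · exact fun t ht => ((hqderiv t ht).continuousAt).continuousWithinAt
    · intro t ht
      rw [interior_Icc] at ht
      exact ((hqderiv t (Ioo_subset_Icc_self ht)).differentiableAt).differentiableWithinAt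
    · intro t ht
      rw [interior_Icc] at ht
      have ht' := Ioo_subset_Icc_self ht
      rw [(hqderiv t ht').deriv]
      have := key t ht'
      have h2 : 0 ≤ (γ - 1) / μ * G t ^ 2 :=
        mul_nonneg (div_nonneg (by linarith) hμ.le) (sq_nonneg _)
      rw [this]
      exact mul_nonneg h2 (Real.exp_pos _).le
  -- lower bound
  have hlow : ∀ t ∈ Icc 0 T, 0 ≤ p t := by
    intro t ht
    have h0 : (0:ℝ) ∈ Icc 0 T := ⟨le_refl 0, le_of_lt hT⟩
    have := hqmono h0 ht ht.1
    have hq0 : q 0 = p₀ := by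
      simp [hq, hA, hp0]
    rw [hq0] at this
    have hqe : 0 ≤ p t * Real.exp (A t) := le_trans hp₀ this
    have he := Real.exp_pos (A t)
    nlinarith
  -- upper bound: r = p - (γ²/4μ)∫G² is antitone
  set B : ℝ → ℝ := fun t => ∫ τ in (0:ℝ)..t, G τ ^ 2 with hB
  have hG2 : Continuous (fun τ => G τ ^ 2) := hG.pow 2
  have hBderiv : ∀ t : ℝ, HasDerivAt B (G t ^ 2) t := fun t =>
    intervalIntegral.integral_hasDerivAt_right (hG2.intervalIntegrable _ _)
      (hG2.stronglyMeasurableAtFilter _ _) hG2.continuousAt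
  set r : ℝ → ℝ := fun t => p t - (γ ^ 2 / (4 * μ)) * B t with hr
  have hrderiv : ∀ t ∈ Icc 0 T,
      HasDerivAt r (p' t - (γ ^ 2 / (4 * μ)) * G t ^ 2) t := fun t ht =>
    (hderiv t ht).sub ((hBderiv t).const_mul _)
  have hranti : AntitoneOn r (Icc 0 T) := by
    apply antitoneOn_of_deriv_nonpos (convex_Icc 0 T)
    · exact fun t ht => ((hrderiv t ht).continuousAt).continuousWithinAt
    · intro t ht
      rw [interior_Icc] at ht
      exact ((hrderiv t (Ioo_subset_Icc_self ht)).differentiableAt).differentiableWithinAt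
    · intro t ht
      rw [interior_Icc] at ht
      have ht' := Ioo_subset_Icc_self ht
      rw [(hrderiv t ht').deriv]
      have h := heq t ht'
      have hnn : 0 ≤ (1 / μ) * (p t + ((2 - γ) / 2) * G t) ^ 2 := by positivity
      linarith
  intro t ht
  refine ⟨hlow t ht, ?_⟩
  have h0 : (0:ℝ) ∈ Icc 0 T := ⟨le_refl 0, le_of_lt hT⟩
  have := hranti h0 ht ht.1
  have hr0 : r 0 = p₀ := by simp [hr, hB, hp0]
  rw [hr0] at this
  simp only [hr, hB] at this
  linarith
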